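/- With the setup of the stabilizer lemma (R a DVR with uniformizer π, α integral over R with minimal polynomial P, A = R[α], f ∈ R[X] monic with f̄ | P̄, P = fg + πT with T̄ ≠ 0, 𝔞 = πA + f(α)A, D̄ = gcd(f̄, ḡ, T̄)): the stabilizer Stab_L(𝔞) is a free R-module of rank deg P and the index [Stab_L(𝔞) : A]_R equals 𝔭^{deg D}. -/

import Mathlib

open Polynomial

/-- Polynomials over a field form a normalized GCD monoid in which `gcd` and `lcm` of nonzero
polynomials are monic. -/
noncomputable instance polyNormalizedGCDMonoid (K : Type*) [Field K] :
    NormalizedGCDMonoid (Polynomial K) :=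
  letI := Classical.decEq K
  UniqueFactorizationMonoid.toNormalizedGCDMonoid _

/-- The length of an `R`-module `M` (the Krull dimension of its submodule lattice).  For
`N ⊆ M` projective of the same finite rank over a DVR with maximal ideal `𝔭`, the index ideal
`[M : N]_R` is `𝔭 ^ length (M ⧸ N)`. -/
noncomputable def moduleLength (R M : Type*) [Semiring R] [AddCommGroup M] [Module R M] : ℕ∞ :=
  WithBot.unbotD 0 (Order.krullDim (Submodule R M))

section Aux

lemma krullDim_submodule_eq_finrank (K V : Type*) [DivisionRing K] [AddCommGroup V] [Module K V]
    [FiniteDimensional K V] :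
    Order.krullDim (Submodule K V) = (Module.finrank K V : ℕ∞) := by
  apply le_antisymm
  · apply iSup_le
    intro p
    have key : ∀ m : ℕ, ∀ _ : m ≤ p.length, m ≤ Module.finrank K (p.toFun ⟨m, by omega⟩) := by
      intro m
      induction m with
      | zero => intro _; exact Nat.zero_le _
      | succ i ih =>
        intro hm
        have h1 := ih (by omega)
        have hlt : p.toFun ⟨i, by omega⟩ < p.toFun ⟨i + 1, by omega⟩ := p.step ⟨i, by omega⟩
        have := Submodule.finrank_lt_finrank_of_lt hlt
        omega
    have h2 := key p.length le_rfl
    have h3 : Module.finrank K (p.toFun ⟨p.length, by omega⟩) ≤ Module.finrank K V :=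
      Submodule.finrank_le _
    have : (p.length : WithBot ℕ∞) ≤ ((Module.finrank K V : ℕ∞) : WithBot ℕ∞) := by
      exact_mod_cast Nat.cast_le.mpr (le_trans h2 h3)
    exact this
  · set n := Module.finrank K V with hn
    let b := Module.finBasis K V
    let p : LTSeries (Submodule K V) :=
      ⟨n, fun i => b.flag i, fun i => b.flag_strictMono (Fin.castSucc_lt_succ (i := i))⟩
    have := le_iSup (fun p : LTSeries (Submodule K V) => (p.length : WithBot ℕ∞)) p
    exact le_trans (by exact_mod_cast le_rfl) this

lemma gcd_aux {K : Type*} [Field K] {F G T c : K[X]} (hF : F ≠ 0) (hT : T ≠ 0)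
    {F₁ : K[X]} (hF₁ : F = gcd F (gcd G T) * F₁)
    (h1 : F ∣ G * c) (h2 : F ∣ T * c) : F₁ ∣ c := by
  set m := gcd G T with hm
  have hm0 : m ≠ 0 := fun h => hT ((gcd_eq_zero_iff G T).mp h).2
  set d := gcd F m with hd
  have hd0 : d ≠ 0 := fun h => hF ((gcd_eq_zero_iff F m).mp h).1
  have hFmc : F ∣ m * c := by
    have : F ∣ gcd (G * c) (T * c) := dvd_gcd h1 h2
    exact this.trans (gcd_mul_right' c G T).dvd
  have hcop : IsCoprime (F / d) (m / d) := isCoprime_div_gcd_div_gcd hm0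
  have hFd : F / d = F₁ := by
    have : d * (F / d) = F := EuclideanDomain.mul_div_cancel' hd0 (gcd_dvd_left F m)
    exact mul_left_cancel₀ hd0 (this.trans hF₁)
  obtain ⟨m₁, hm₁⟩ := gcd_dvd_right F m
  have hmd : m / d = m₁ := by
    have : d * (m / d) = m := EuclideanDomain.mul_div_cancel' hd0 (gcd_dvd_right F m)
    exact mul_left_cancel₀ hd0 (this.trans hm₁)
  rw [hFd, hmd] at hcop
  have : F₁ ∣ m₁ * c := by
    have h' : d * F₁ ∣ d * (m₁ * c) := by
      rw [← hF₁, ← mul_assoc, ← hm₁]; exact hFmc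
    exact (mul_dvd_mul_iff_left hd0).mp h'
  exact hcop.dvd_of_dvd_mul_left this

/-- Change of rings for the submodule lattice along a surjective algebra map. -/
def submoduleOrderIsoOfSurjective (R k M : Type*) [CommRing R] [CommRing k] [Algebra R k]
    [AddCommGroup M] [Module k M] [Module R M] [IsScalarTower R k M]
    (hsurj : Function.Surjective (algebraMap R k)) : Submodule R M ≃o Submodule k M where
  toFun S :=
    { carrier := S
      add_mem' := fun ha hb => S.add_mem ha hb
      zero_mem' := S.zero_mem
      smul_mem' := fun c x hx => by
        obtain ⟨r, rfl⟩ := hsurj c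
        rw [IsScalarTower.algebraMap_smul]
        exact S.smul_mem r hx }
  invFun T := T.restrictScalars R
  left_inv S := by ext x; simp [Submodule.restrictScalars_mem]
  right_inv T := by ext x; simp [Submodule.restrictScalars_mem]
  map_rel_iff' := Iff.rfl

end Aux

/-- **Stabilizer lemma, part (iii).** With the setup of the stabilizer lemma
(`R` a DVR with uniformizer `π`, `α` integral over `R` with minimal polynomial `P`, `A = R[α]`,
`f ∈ R[X]` monic with `f̄ ∣ P̄`, `P = fg + πT` with `T̄ ≠ 0`, `𝔞 = πA + f(α)A`, and `D` a
monic lift of `D̄ = (f̄, ḡ, T̄)`): the stabilizer `Stab_L(𝔞) = (𝔞 : 𝔞)` is a free `R`-module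
of rank `deg P` containing `A`, and `[Stab_L(𝔞) : A]_R = 𝔭 ^ deg D`, i.e.
`length (Stab_L(𝔞) ⧸ A) = deg D`. -/
theorem stmt6 (R : Type*) [CommRing R] [IsDomain R] [IsDiscreteValuationRing R]
    (π : R) (hπ : Irreducible π)
    (K L : Type*) [Field K] [Field L] [Algebra R K] [IsFractionRing R K]
    [Algebra K L] [Algebra R L] [IsScalarTower R K L]
    [FiniteDimensional K L] [Algebra.IsSeparable K L]
    (α : L) (hα : IsIntegral R α) (hgen : Algebra.adjoin K {α} = ⊤)
    (P : R[X]) (hP : P = minpoly R α)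
    (A : Subalgebra R L) (hA : A = Algebra.adjoin R {α})
    (f g T D : R[X]) (hf : f.Monic)
    (hfP : f.map (IsLocalRing.residue R) ∣ P.map (IsLocalRing.residue R))
    (hPfg : P = f * g + C π * T)
    (hT : T.map (IsLocalRing.residue R) ≠ 0)
    (hD : D.Monic)
    (hDgcd : D.map (IsLocalRing.residue R) =
      gcd (f.map (IsLocalRing.residue R))
        (gcd (g.map (IsLocalRing.residue R)) (T.map (IsLocalRing.residue R))))
    (𝔞 : Submodule R L)
    (h𝔞 : 𝔞 = Submodule.map (LinearMap.mulLeft R (algebraMap R L π))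
        (Subalgebra.toSubmodule A) ⊔
      Submodule.map (LinearMap.mulLeft R (aeval α f)) (Subalgebra.toSubmodule A)) :
    Module.Free R ↥(𝔞 / 𝔞) ∧ Module.finrank R ↥(𝔞 / 𝔞) = P.natDegree ∧
      Subalgebra.toSubmodule A ≤ 𝔞 / 𝔞 ∧
      moduleLength R (↥(𝔞 / 𝔞) ⧸
          Submodule.comap (𝔞 / 𝔞 : Submodule R L).subtype (Subalgebra.toSubmodule A)) =
        (D.natDegree : ℕ∞) := by
  set res := IsLocalRing.residue R with hres_def
  set k := IsLocalRing.ResidueField R with hk_def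
  -- basic injectivity facts
  have hinj : Function.Injective (algebraMap R L) := by
    rw [IsScalarTower.algebraMap_eq R K L]
    exact (algebraMap K L).injective.comp (IsFractionRing.injective R K)
  haveI : Module.IsTorsionFree R L := Module.isTorsionFree_iff_algebraMap_injective.mpr hinj
  have hπ0 : π ≠ 0 := hπ.ne_zero
  set πL := algebraMap R L π with hπL_def
  have hπL : πL ≠ 0 := fun h =>
    hπ0 (hinj (show algebraMap R L π = algebraMap R L 0 by rw [map_zero]; exact h))
  have hres_pi : res π = 0 := by
    rw [hres_def]
    exact Ideal.Quotient.eq_zero_iff_mem.mpr (hπ.maximalIdeal_eq ▸ Ideal.mem_span_singleton_self π)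
  have hPmonic : P.Monic := hP ▸ minpoly.monic hα
  -- residue of a polynomial vanishes iff divisible by `C π`
  have hbar0 : ∀ p : R[X], p.map res = 0 ↔ C π ∣ p := by
    intro p
    rw [C_dvd_iff_dvd_coeff]
    constructor
    · intro h i
      have : (p.map res).coeff i = 0 := by rw [h]; simp
      rw [coeff_map] at this
      have : p.coeff i ∈ IsLocalRing.maximalIdeal R := Ideal.Quotient.eq_zero_iff_mem.mp this
      rwa [hπ.maximalIdeal_eq, Ideal.mem_span_singleton] at this
    · intro h
      ext i
      rw [coeff_map, coeff_zero]
      obtain ⟨c, hc⟩ := h i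
      rw [hc, map_mul, hres_pi, zero_mul]
  -- vanishing at α iff divisible by P
  have hP_dvd : ∀ p : R[X], aeval α p = 0 ↔ P ∣ p := by
    intro p
    constructor
    · intro h; exact hP ▸ minpoly.isIntegrallyClosed_dvd hα h
    · rintro ⟨c, rfl⟩
      rw [map_mul, hP, minpoly.aeval, zero_mul]
  -- membership in A
  have hAmem : ∀ x : L, x ∈ Subalgebra.toSubmodule A ↔ ∃ q : R[X], aeval α q = x := by
    intro x
    rw [Subalgebra.mem_toSubmodule, hA, Algebra.adjoin_singleton_eq_range_aeval]
    exact AlgHom.mem_range _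
  -- membership in 𝔞
  have h𝔞mem : ∀ x : L, x ∈ 𝔞 ↔
      ∃ u v : R[X], x = πL * aeval α u + aeval α f * aeval α v := by
    intro x
    rw [h𝔞, Submodule.mem_sup]
    constructor
    · rintro ⟨y, hy, z, hz, rfl⟩
      rw [Submodule.mem_map] at hy hz
      obtain ⟨a, ha, rfl⟩ := hy
      obtain ⟨b, hb, rfl⟩ := hz
      obtain ⟨u, rfl⟩ := (hAmem _).mp ha
      obtain ⟨v, rfl⟩ := (hAmem _).mp hb
      exact ⟨u, v, by simp [LinearMap.mulLeft_apply]⟩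
    · rintro ⟨u, v, rfl⟩
      refine ⟨πL * aeval α u, ?_, aeval α f * aeval α v, ?_, rfl⟩ <;>
        exact Submodule.mem_map_of_mem ((hAmem _).mpr ⟨_, rfl⟩)
  have hπ𝔞 : πL ∈ 𝔞 := (h𝔞mem _).mpr ⟨1, 0, by simp⟩
  have hf𝔞 : aeval α f ∈ 𝔞 := (h𝔞mem _).mpr ⟨0, 1, by simp⟩
  have h𝔞A : ∀ q : R[X], ∀ y ∈ 𝔞, aeval α q * y ∈ 𝔞 := by
    intro q y hy
    obtain ⟨u, v, rfl⟩ := (h𝔞mem _).mp hy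
    refine (h𝔞mem _).mpr ⟨q * u, q * v, ?_⟩
    simp only [map_mul]; ring
  have h𝔞leA : 𝔞 ≤ Subalgebra.toSubmodule A := by
    intro x hx
    obtain ⟨u, v, rfl⟩ := (h𝔞mem _).mp hx
    refine (hAmem _).mpr ⟨C π * u + f * v, ?_⟩
    simp only [map_add, map_mul, aeval_C, ← hπL_def]
  -- polynomial criterion for membership in 𝔞
  have hApoly : ∀ h : R[X], aeval α h ∈ 𝔞 ↔ ∃ a b c : R[X], h = C π * a + f * b + P * c := by
    intro h
    constructor
    · intro hh
      obtain ⟨u, v, huv⟩ := (h𝔞mem _).mp hh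
      have h0 : aeval α (h - (C π * u + f * v)) = 0 := by
        simp only [map_sub, map_add, map_mul, aeval_C]
        rw [huv, ← hπL_def]; ring
      obtain ⟨c, hc⟩ := (hP_dvd _).mp h0
      exact ⟨u, v, c, by linear_combination hc⟩
    · rintro ⟨a, b, c, rfl⟩
      have : aeval α (C π * a + f * b + P * c) = πL * aeval α a + aeval α f * aeval α b := by
        simp only [map_add, map_mul, aeval_C, hP, minpoly.aeval, ← hπL_def]; ring
      rw [this]
      exact (h𝔞mem _).mpr ⟨a, b, rfl⟩
  -- reduction mod π data
  set F := f.map res with hF_def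
  set G := g.map res with hG_def
  set Tb := T.map res with hTb_def
  have hFmonic : F.Monic := hf.map res
  have hF0 : F ≠ 0 := hFmonic.ne_zero
  have hFG : P.map res = F * G := by
    rw [hPfg]
    simp [Polynomial.map_add, Polynomial.map_mul, hres_pi]; rfl
  have hPb0 : P.map res ≠ 0 := (hPmonic.map res).ne_zero
  have hG0 : G ≠ 0 := by
    intro h
    rw [h, mul_zero] at hFG
    exact hPb0 hFG
  set d := gcd F (gcd G Tb) with hd_def
  have hdD : D.map res = d := hDgcd
  have hdF : d ∣ F := gcd_dvd_left _ _
  have hdG : d ∣ G := (gcd_dvd_right _ _).trans (gcd_dvd_left _ _)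
  have hdT : d ∣ Tb := (gcd_dvd_right _ _).trans (gcd_dvd_right _ _)
  obtain ⟨F₁, hF₁⟩ := hdF
  obtain ⟨G₁, hG₁⟩ := hdG
  obtain ⟨T₁, hT₁⟩ := hdT
  set N := F₁ * G with hN_def
  have hd0 : d ≠ 0 := fun h => hF0 (by rw [hF₁, h, zero_mul])
  have hF₁0 : F₁ ≠ 0 := fun h => hF0 (by rw [hF₁, h, mul_zero])
  have hN0 : N ≠ 0 := mul_ne_zero hF₁0 hG0
  -- surjectivity of reduction on polynomials
  have hbarsurj : Function.Surjective (Polynomial.map res : R[X] → k[X]) :=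
    Polynomial.map_surjective res (IsLocalRing.residue_surjective)
  -- the central polynomial characterization
  have hSc : ∀ h : R[X],
      ((∃ a b c : R[X], h = C π * a + f * b + P * c) ∧
        (∃ a b c : R[X], h * f = C π * (C π * a + f * b) + P * c)) ↔ N ∣ h.map res := by
    intro h
    constructor
    · rintro ⟨⟨a', b', c', hsc1⟩, ⟨a, b, c, hsc2⟩⟩
      -- step 1 : from hsc2, f * w = C π * (C π * a + T * c) where w := h - C π * b - g * c
      have hw : f * (h - C π * b - g * c) = C π * (C π * a + T * c) := by
        linear_combination hsc2 + c * hPfg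
      have hwbar : F * ((h - C π * b - g * c).map res) = 0 := by
        have := congrArg (Polynomial.map res) hw
        simpa [Polynomial.map_mul, Polynomial.map_add, Polynomial.map_sub, hres_pi] using this
      have hw0 : (h - C π * b - g * c).map res = 0 := by
        rcases mul_eq_zero.mp hwbar with h' | h'
        · exact absurd h' hF0
        · exact h'
      obtain ⟨w₁, hw₁⟩ := (hbar0 _).mp hw0
      have hfw₁ : f * w₁ = C π * a + T * c := by
        have hCπ0 : (C π : R[X]) ≠ 0 := fun hh => hπ0 (by simpa using congrArg (fun p => p.coeff 0) hh)
        apply mul_left_cancel₀ hCπ0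
        calc C π * (f * w₁) = f * (C π * w₁) := by ring
          _ = f * (h - C π * b - g * c) := by rw [← hw₁]
          _ = C π * (C π * a + T * c) := hw
      -- divisibilities mod π
      have hdvdT : F ∣ Tb * (c.map res) := by
        refine ⟨w₁.map res, ?_⟩
        have := congrArg (Polynomial.map res) hfw₁
        simpa [Polynomial.map_mul, Polynomial.map_add, hres_pi] using this.symm
      have hhbar : h.map res = G * c.map res := by
        have h2 : h.map res * f.map res = P.map res * c.map res := by
          have h3 := congrArg (Polynomial.map res) hsc2
          simp only [Polynomial.map_mul, Polynomial.map_add, Polynomial.map_C, hres_pi,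
            Polynomial.C_0, zero_mul, zero_add] at h3
          rw [h3]
        rw [← hF_def] at h2
        apply mul_left_cancel₀ hF0
        calc F * h.map res = h.map res * F := mul_comm _ _
          _ = P.map res * c.map res := h2
          _ = F * (G * c.map res) := by rw [hFG]; ring
      have hdvdG : F ∣ G * (c.map res) := by
        rw [← hhbar]
        have h3 := congrArg (Polynomial.map res) hsc1
        simp only [Polynomial.map_add, Polynomial.map_mul, Polynomial.map_C, hres_pi,
          Polynomial.C_0, zero_mul, zero_add] at h3
        refine ⟨b'.map res + G * c'.map res, ?_⟩
        rw [h3, ← hF_def, hFG]; ring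
      have hF₁c : F₁ ∣ c.map res := gcd_aux hF0 hT hF₁ hdvdG hdvdT
      obtain ⟨Q, hQ⟩ := hF₁c
      exact ⟨Q, by rw [hhbar, hQ, hN_def]; ring⟩
    · rintro ⟨Q', hQ'⟩
      obtain ⟨q, hq⟩ := hbarsurj Q'
      obtain ⟨f₁', hf₁'⟩ := hbarsurj F₁
      obtain ⟨g₁', hg₁'⟩ := hbarsurj G₁
      obtain ⟨t₁', ht₁'⟩ := hbarsurj T₁
      constructor
      · -- Sc1
        have h0 : (h - f * (g₁' * q)).map res = 0 := by
          simp only [Polynomial.map_sub, Polynomial.map_mul]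
          rw [hq, hg₁', hQ', hN_def, ← hF_def, hF₁, hG₁]; ring
        obtain ⟨a, ha⟩ := (hbar0 _).mp h0
        exact ⟨a, g₁' * q, 0, by linear_combination ha⟩
      · -- Sc2
        have h0 : (h - g * (f₁' * q)).map res = 0 := by
          simp only [Polynomial.map_sub, Polynomial.map_mul]
          rw [hq, hf₁', hQ', hN_def, ← hG_def]; ring
        obtain ⟨v, hv⟩ := (hbar0 _).mp h0
        have h1 : (f * (t₁' * q) - T * (f₁' * q)).map res = 0 := by
          simp only [Polynomial.map_sub, Polynomial.map_mul]
          rw [hq, ht₁', hf₁', ← hF_def, ← hTb_def, hF₁, hT₁]; ring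
        obtain ⟨a₂, ha₂⟩ := (hbar0 _).mp h1
        refine ⟨a₂, v - t₁' * q, f₁' * q, ?_⟩
        -- h * f = C π * (C π * a₂ + f * (v - t₁' * q)) + P * (f₁' * q)
        have e1 : h - g * (f₁' * q) = C π * v := by linear_combination hv
        linear_combination f * e1 - (f₁' * q) * hPfg + C π * ha₂
    -- end hSc
  -- membership in the stabilizer
  have hStabmem : ∀ x : L, x ∈ 𝔞 / 𝔞 ↔
      ∃ h : R[X], N ∣ h.map res ∧ πL * x = aeval α h := by
    intro x
    rw [Submodule.mem_div_iff_forall_mul_mem]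
    constructor
    · intro hx
      have hx1 : x * πL ∈ 𝔞 := hx πL hπ𝔞
      obtain ⟨h, hh⟩ := (hAmem _).mp (h𝔞leA hx1)
      refine ⟨h, ?_, by rw [hh, mul_comm]⟩
      rw [← hSc h]
      constructor
      · exact (hApoly h).mp (hh ▸ hx1)
      · have hx2 : x * aeval α f ∈ 𝔞 := hx _ hf𝔞
        obtain ⟨u, v, huv⟩ := (h𝔞mem _).mp hx2
        have h0 : aeval α (h * f - C π * (C π * u + f * v)) = 0 := by
          simp only [map_sub, map_mul, map_add, aeval_C, ← hπL_def]
          rw [hh]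
          calc x * πL * aeval α f - πL * (πL * aeval α u + aeval α f * aeval α v)
              = πL * (x * aeval α f - (πL * aeval α u + aeval α f * aeval α v)) := by ring
            _ = 0 := by rw [← huv]; ring
        obtain ⟨c, hc⟩ := (hP_dvd _).mp h0
        exact ⟨u, v, c, by linear_combination hc⟩
    · rintro ⟨h, hNh, hπx⟩
      obtain ⟨⟨a1, b1, c1, hsc1⟩, ⟨a2, b2, c2, hsc2⟩⟩ := (hSc h).mpr hNh
      have hxπ : x * πL ∈ 𝔞 := by
        rw [mul_comm, hπx]
        exact (hApoly h).mpr ⟨a1, b1, c1, hsc1⟩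
      have hxf : x * aeval α f ∈ 𝔞 := by
        have : πL * (x * aeval α f) = πL * (πL * aeval α a2 + aeval α f * aeval α b2) := by
          calc πL * (x * aeval α f) = (πL * x) * aeval α f := by ring
            _ = aeval α h * aeval α f := by rw [hπx]
            _ = aeval α (h * f) := by rw [map_mul]
            _ = aeval α (C π * (C π * a2 + f * b2) + P * c2) := by rw [hsc2]
            _ = πL * (πL * aeval α a2 + aeval α f * aeval α b2) := by
                simp only [map_add, map_mul, aeval_C, hP, minpoly.aeval, ← hπL_def]; ring
        have := mul_left_cancel₀ hπL this
        rw [this]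
        exact (h𝔞mem _).mpr ⟨a2, b2, rfl⟩
      intro y hy
      obtain ⟨u, v, rfl⟩ := (h𝔞mem _).mp hy
      have e : x * (πL * aeval α u + aeval α f * aeval α v)
          = aeval α u * (x * πL) + aeval α v * (x * aeval α f) := by ring
      rw [e]
      exact 𝔞.add_mem (h𝔞A u _ hxπ) (h𝔞A v _ hxf)
  -- lift of N
  obtain ⟨E, hE⟩ := hbarsurj N
  set ρ := πL⁻¹ * aeval α E with hρ_def
  have hπρ : πL * ρ = aeval α E := by
    rw [hρ_def]; field_simp
  -- second description of the stabilizer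
  have hStab2 : ∀ x : L, x ∈ 𝔞 / 𝔞 ↔ ∃ a b : R[X], x = aeval α a + ρ * aeval α b := by
    intro x
    rw [hStabmem]
    constructor
    · rintro ⟨h, ⟨Q', hQ'⟩, hπx⟩
      obtain ⟨q, hq⟩ := hbarsurj Q'
      have h0 : (h - E * q).map res = 0 := by
        simp [Polynomial.map_sub, Polynomial.map_mul, hE, hq, hQ']
      obtain ⟨a, ha⟩ := (hbar0 _).mp h0
      refine ⟨a, q, ?_⟩
      apply mul_left_cancel₀ hπL
      calc πL * x = aeval α h := hπx
        _ = aeval α (C π * a + E * q) := by rw [show h = C π * a + E * q by linear_combination ha]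
        _ = πL * aeval α a + aeval α E * aeval α q := by
            simp only [map_add, map_mul, aeval_C, ← hπL_def]
        _ = πL * (aeval α a + ρ * aeval α q) := by rw [← hπρ]; ring
    · rintro ⟨a, b, rfl⟩
      refine ⟨C π * a + E * b, ⟨b.map res, by
        simp [Polynomial.map_add, Polynomial.map_mul, hres_pi, hE]⟩, ?_⟩
      simp only [map_add, map_mul, aeval_C, ← hπL_def]
      rw [← hπρ]; ring
  -- goal 3 : A ⊆ Stab
  have goal3 : Subalgebra.toSubmodule A ≤ 𝔞 / 𝔞 := by
    intro x hx
    obtain ⟨q, rfl⟩ := (hAmem _).mp hx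
    exact (hStab2 _).mpr ⟨q, 0, by simp⟩
  -- the stabilizer as a sup of two finitely generated submodules
  have hStabEq : (𝔞 / 𝔞 : Submodule R L) = Subalgebra.toSubmodule A ⊔
      Submodule.map (LinearMap.mulLeft R ρ) (Subalgebra.toSubmodule A) := by
    ext x
    rw [hStab2, Submodule.mem_sup]
    constructor
    · rintro ⟨a, b, rfl⟩
      exact ⟨aeval α a, (hAmem _).mpr ⟨a, rfl⟩, ρ * aeval α b,
        Submodule.mem_map_of_mem ((hAmem _).mpr ⟨b, rfl⟩), rfl⟩
    · rintro ⟨y, hy, z, hz, rfl⟩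
      obtain ⟨a, rfl⟩ := (hAmem _).mp hy
      rw [Submodule.mem_map] at hz
      obtain ⟨w, hw, rfl⟩ := hz
      obtain ⟨b, rfl⟩ := (hAmem _).mp hw
      exact ⟨a, b, by simp [LinearMap.mulLeft_apply]⟩
  -- finite generation
  have hAfg : (Subalgebra.toSubmodule A).FG := by
    rw [hA]
    exact hα.fg_adjoin_singleton
  have hStabfg : (𝔞 / 𝔞 : Submodule R L).FG := by
    rw [hStabEq]
    exact hAfg.sup (hAfg.map _)
  haveI hfinStab : Module.Finite R ↥(𝔞 / 𝔞 : Submodule R L) := Module.Finite.iff_fg.mpr hStabfg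
  haveI hfinA : Module.Finite R ↥(Subalgebra.toSubmodule A) := Module.Finite.iff_fg.mpr hAfg
  have goal1 : Module.Free R ↥(𝔞 / 𝔞 : Submodule R L) := Module.free_of_finite_type_torsion_free'
  -- rank computation
  have hrankA : Module.finrank R ↥(Subalgebra.toSubmodule A) = P.natDegree := by
    have h1 : Module.finrank R ↥A = P.natDegree := by
      rw [hA, hP]
      exact (Algebra.adjoin.powerBasis' hα).finrank
    exact h1
  have hle1 : Module.finrank R ↥(Subalgebra.toSubmodule A)
      ≤ Module.finrank R ↥(𝔞 / 𝔞 : Submodule R L) :=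
    Submodule.finrank_mono goal3
  have hφmem : ∀ x : L, x ∈ (𝔞 / 𝔞 : Submodule R L) → πL * x ∈ Subalgebra.toSubmodule A := by
    intro x hx
    have : x * πL ∈ 𝔞 := (Submodule.mem_div_iff_forall_mul_mem.mp hx) πL hπ𝔞
    exact h𝔞leA (by rwa [mul_comm] at this)
  let φ : ↥(𝔞 / 𝔞 : Submodule R L) →ₗ[R] ↥(Subalgebra.toSubmodule A) :=
    LinearMap.codRestrict _
      ((LinearMap.mulLeft R πL).comp (Submodule.subtype _)) (fun x => hφmem x x.2)
  have hφinj : Function.Injective φ := by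
    intro x y hxy
    have h1 : πL * (x : L) = πL * (y : L) := congrArg Subtype.val hxy
    exact Subtype.ext (mul_left_cancel₀ hπL h1)
  have hle2 := LinearMap.finrank_le_finrank_of_injective hφinj
  have goal2 : Module.finrank R ↥(𝔞 / 𝔞 : Submodule R L) = P.natDegree :=
    le_antisymm (hrankA ▸ hle2) (hrankA ▸ hle1)
  -- the length computation
  set Csub := Submodule.comap (𝔞 / 𝔞 : Submodule R L).subtype (Subalgebra.toSubmodule A)
    with hCsub_def
  have hρmem : ∀ q : R[X], ρ * aeval α q ∈ 𝔞 / 𝔞 := fun q => (hStab2 _).mpr ⟨0, q, by simp⟩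
  let ψ : R[X] →ₗ[R] ↥(𝔞 / 𝔞 : Submodule R L) :=
    LinearMap.codRestrict _
      ((LinearMap.mulLeft R ρ).comp (Polynomial.aeval α).toLinearMap) hρmem
  let ψ' := Csub.mkQ.comp ψ
  have hψapp : ∀ q : R[X], ((ψ q : ↥(𝔞 / 𝔞 : Submodule R L)) : L) = ρ * aeval α q :=
    fun q => rfl
  have hψ'surj : Function.Surjective ψ' := by
    intro z
    obtain ⟨⟨x, hx⟩, rfl⟩ := Csub.mkQ_surjective z
    obtain ⟨a, b, hab⟩ := (hStab2 x).mp hx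
    refine ⟨b, ?_⟩
    show Csub.mkQ (ψ b) = Csub.mkQ ⟨x, hx⟩
    rw [Submodule.mkQ_apply, Submodule.mkQ_apply, Submodule.Quotient.eq]
    rw [hCsub_def, Submodule.mem_comap]
    have h1 : (𝔞 / 𝔞 : Submodule R L).subtype (ψ b - ⟨x, hx⟩) = ρ * aeval α b - x := by
      simp [hψapp]
    rw [h1]
    have h2 : ρ * aeval α b - x = -(aeval α a) := by rw [hab]; ring
    rw [h2]
    exact Submodule.neg_mem _ ((hAmem _).mpr ⟨a, rfl⟩)
  have hkerψ' : ∀ q : R[X], ψ' q = 0 ↔ d ∣ q.map res := by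
    intro q
    have h1 : ψ' q = 0 ↔ ρ * aeval α q ∈ Subalgebra.toSubmodule A := by
      show Csub.mkQ (ψ q) = 0 ↔ _
      rw [Submodule.mkQ_apply, Submodule.Quotient.mk_eq_zero, hCsub_def, Submodule.mem_comap]
      constructor
      · intro h; rwa [Submodule.subtype_apply, hψapp] at h
      · intro h; rwa [Submodule.subtype_apply, hψapp]
    rw [h1]
    constructor
    · intro hq
      obtain ⟨u, hu⟩ := (hAmem _).mp hq
      have h0 : aeval α (E * q - C π * u) = 0 := by
        simp only [map_sub, map_mul, aeval_C, ← hπL_def]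
        rw [hu, ← hπρ]; ring
      obtain ⟨c, hc⟩ := (hP_dvd _).mp h0
      have hb := congrArg (Polynomial.map res) hc
      simp only [Polynomial.map_sub, Polynomial.map_mul, Polynomial.map_C, hres_pi,
        Polynomial.C_0, zero_mul, sub_zero] at hb
      rw [hE, hFG] at hb
      have h4 : N * q.map res = N * (d * c.map res) := by
        rw [hb, hF₁, hN_def]; ring
      exact ⟨c.map res, mul_left_cancel₀ hN0 h4⟩
    · rintro ⟨cb, hcb⟩
      obtain ⟨c', hc'⟩ := hbarsurj cb
      have h0 : (E * q - P * c').map res = 0 := by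
        simp only [Polynomial.map_sub, Polynomial.map_mul]
        rw [hE, hcb, hc', hFG, hF₁, hN_def]; ring
      obtain ⟨u, hu⟩ := (hbar0 _).mp h0
      refine (hAmem _).mpr ⟨u, ?_⟩
      apply mul_left_cancel₀ hπL
      calc πL * aeval α u = aeval α (C π * u) := by
            simp only [map_mul, aeval_C, ← hπL_def]
        _ = aeval α (E * q - P * c') := by rw [show E * q - P * c' = C π * u from by linear_combination hu]
        _ = aeval α E * aeval α q := by
            rw [map_sub, map_mul, map_mul, hP, minpoly.aeval]; ring
        _ = πL * (ρ * aeval α q) := by rw [← hπρ]; ring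
  -- degree of d
  have hdmonic : d.Monic := hdD ▸ hD.map res
  have hddeg : d.natDegree = D.natDegree := by
    rw [← hdD]
    exact hD.natDegree_map res
  -- the model module
  let ψ₂ : R[X] →ₗ[R] AdjoinRoot d :=
    { toFun := fun p => AdjoinRoot.mk d (p.map res)
      map_add' := fun p q => by
        show AdjoinRoot.mk d ((p + q).map res)
            = AdjoinRoot.mk d (p.map res) + AdjoinRoot.mk d (q.map res)
        rw [Polynomial.map_add, map_add]
      map_smul' := fun r p => by
        show AdjoinRoot.mk d ((r • p).map res) = r • AdjoinRoot.mk d (p.map res)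
        rw [Polynomial.smul_eq_C_mul, Polynomial.map_mul, Polynomial.map_C, map_mul]
        rw [← IsScalarTower.algebraMap_smul k r (AdjoinRoot.mk d (p.map res)), Algebra.smul_def,
          AdjoinRoot.algebraMap_eq]
        rfl }
  have hψ₂app : ∀ q : R[X], ψ₂ q = AdjoinRoot.mk d (q.map res) := fun q => rfl
  have hψ₂surj : Function.Surjective ψ₂ := by
    intro z
    obtain ⟨p, hp⟩ := AdjoinRoot.mk_surjective z
    obtain ⟨q, hq⟩ := hbarsurj p
    exact ⟨q, by rw [hψ₂app, hq, hp]⟩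
  have hkerψ₂ : ∀ q : R[X], ψ₂ q = 0 ↔ d ∣ q.map res := by
    intro q
    rw [hψ₂app]
    exact AdjoinRoot.mk_eq_zero
  have hkereq : LinearMap.ker ψ' = LinearMap.ker ψ₂ := by
    ext q
    rw [LinearMap.mem_ker, LinearMap.mem_ker, hkerψ' q, ← hkerψ₂ q]
  let eQ : (↥(𝔞 / 𝔞 : Submodule R L) ⧸ Csub) ≃ₗ[R] AdjoinRoot d :=
    ((ψ'.quotKerEquivOfSurjective hψ'surj).symm.trans
      (Submodule.quotEquivOfEq _ _ hkereq)).trans (ψ₂.quotKerEquivOfSurjective hψ₂surj)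
  -- dimension of the model
  let pb2 := AdjoinRoot.powerBasis' hdmonic
  haveI : Module.Finite k (AdjoinRoot d) := Module.Finite.of_basis pb2.basis
  have hfr : Module.finrank k (AdjoinRoot d) = d.natDegree := pb2.finrank
  have hkd : Order.krullDim (Submodule R (↥(𝔞 / 𝔞 : Submodule R L) ⧸ Csub))
      = ((D.natDegree : ℕ∞) : WithBot ℕ∞) := by
    rw [Order.krullDim_eq_of_orderIso (Submodule.orderIsoMapComap eQ)]
    rw [Order.krullDim_eq_of_orderIso
      (submoduleOrderIsoOfSurjective R k (AdjoinRoot d) IsLocalRing.residue_surjective)]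
    rw [krullDim_submodule_eq_finrank, hfr, hddeg]
  refine ⟨goal1, goal2, goal3, ?_⟩
  rw [moduleLength, hkd]
  rfl
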